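/- Let F and G be disjoint finite sets of integers. For v : F → ℂ and any integer m define the truncated right-hand side R_m(v) = −i m² v_m · 1_{m∈F} + i Σ v_{k₁} · conj(v_{k₂}) · v_{k₃} · conj(v_{k₄}) · v_{k₅}, where the sum runs over all 5-tuples (k₁,…,k₅) ∈ F⁵ with k₁ − k₂ + k₃ − k₄ + k₅ = m (so for m ∈ G only the quintic convolution term is present). Let u' : ℝ → F → ℂ be differentiable and satisfy, for every k ∈ F, the t-model equations: d u'_k/dt = −i k² u'_k + i Σ_{k₁−k₂+k₃−k₄+k₅=k, all kᵢ∈F} u'_{k₁} conj(u'_{k₂}) u'_{k₃} conj(u'_{k₄}) u'_{k₅} + t·[ 3i Σ_{k₁∈G, k₂,…,k₅∈F, k₁−k₂+k₃−k₄+k₅=k} R_{k₁}(u'(t)) conj(u'_{k₂}) u'_{k₃} conj(u'_{k₄}) u'_{k₅} + 2i Σ_{k₂∈G, k₁,k₃,k₄,k₅∈F, k₁−k₂+k₃−k₄+k₅=k} u'_{k₁} conj(R_{k₂}(u'(t))) u'_{k₃} conj(u'_{k₄}) u'_{k₅} ]. Then the resolved mass M_F(t) = Σ_{k∈F} |u'_k(t)|²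 is differentiable and satisfies, for every t ∈ ℝ, d M_F(t)/dt = −2t · Σ_{k∈G} |R_k(u'(t))|². -/

import Mathlib

open Finset

/-- The set of 5-tuples `(k₁,k₂,k₃,k₄,k₅) ∈ A × B × C × D × E` with
`k₁ - k₂ + k₃ - k₄ + k₅ = k`. -/
def mixedQuintuples (A B C D E : Finset ℤ) (k : ℤ) : Finset (ℤ × ℤ × ℤ × ℤ × ℤ) :=
  (A ×ˢ B ×ˢ C ×ˢ D ×ˢ E).filter
    (fun p => p.1 - p.2.1 + p.2.2.1 - p.2.2.2.1 + p.2.2.2.2 = k)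

/-- The truncated right-hand side of the Fourier-Galerkin 1D critical focusing NLS:
`R_m(v) = -i m² v_m · 1_{m ∈ F} + i Σ_{k₁-k₂+k₃-k₄+k₅ = m, kᵢ ∈ F}
v_{k₁} conj(v_{k₂}) v_{k₃} conj(v_{k₄}) v_{k₅}`. -/
noncomputable def truncRHS (F : Finset ℤ) (v : ℤ → ℂ) (m : ℤ) : ℂ :=
  (if m ∈ F then -Complex.I * (m : ℂ) ^ 2 * v m else 0)
    + Complex.I * ∑ p ∈ mixedQuintuples F F F F F m,
        v p.1 * (starRingEnd ℂ) (v p.2.1) * v p.2.2.1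
          * (starRingEnd ℂ) (v p.2.2.2.1) * v p.2.2.2.2

/-- The right-hand side of the `t`-model equation for a resolved mode `k ∈ F`. -/
noncomputable def tModelRHS (F G : Finset ℤ) (v : ℤ → ℂ) (t : ℝ) (k : ℤ) : ℂ :=
  -Complex.I * (k : ℂ) ^ 2 * v k
    + Complex.I * ∑ p ∈ mixedQuintuples F F F F F k,
        v p.1 * (starRingEnd ℂ) (v p.2.1) * v p.2.2.1
          * (starRingEnd ℂ) (v p.2.2.2.1) * v p.2.2.2.2
    + (t : ℂ) *
      (3 * Complex.I * ∑ p ∈ mixedQuintuples G F F F F k,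
          truncRHS F v p.1 * (starRingEnd ℂ) (v p.2.1) * v p.2.2.1
            * (starRingEnd ℂ) (v p.2.2.2.1) * v p.2.2.2.2
        + 2 * Complex.I * ∑ p ∈ mixedQuintuples F G F F F k,
            v p.1 * (starRingEnd ℂ) (truncRHS F v p.2.1) * v p.2.2.1
              * (starRingEnd ℂ) (v p.2.2.2.1) * v p.2.2.2.2)

/-- The resolved quintic convolution sum `Q_m(v)`. -/
noncomputable def Qsum (F : Finset ℤ) (v : ℤ → ℂ) (m : ℤ) : ℂ :=
  ∑ p ∈ mixedQuintuples F F F F F m,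
    v p.1 * (starRingEnd ℂ) (v p.2.1) * v p.2.2.1
      * (starRingEnd ℂ) (v p.2.2.2.1) * v p.2.2.2.2

/-- The first (`3i`) correction sum in the `t`-model. -/
noncomputable def Asum (F G : Finset ℤ) (v : ℤ → ℂ) (k : ℤ) : ℂ :=
  ∑ p ∈ mixedQuintuples G F F F F k,
    truncRHS F v p.1 * (starRingEnd ℂ) (v p.2.1) * v p.2.2.1
      * (starRingEnd ℂ) (v p.2.2.2.1) * v p.2.2.2.2

/-- The second (`2i`) correction sum in the `t`-model. -/
noncomputable def Bsum (F G : Finset ℤ) (v : ℤ → ℂ) (k : ℤ) : ℂ :=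
  ∑ p ∈ mixedQuintuples F G F F F k,
    v p.1 * (starRingEnd ℂ) (truncRHS F v p.2.1) * v p.2.2.1
      * (starRingEnd ℂ) (v p.2.2.2.1) * v p.2.2.2.2

lemma truncRHS_eq (F : Finset ℤ) (v : ℤ → ℂ) (m : ℤ) :
    truncRHS F v m = (if m ∈ F then -Complex.I * (m:ℂ)^2 * v m else 0)
      + Complex.I * Qsum F v m := rfl

lemma tModelRHS_eq (F G : Finset ℤ) (v : ℤ → ℂ) (t : ℝ) (k : ℤ) :
    tModelRHS F G v t k = -Complex.I * (k:ℂ)^2 * v k + Complex.I * Qsum F v k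
      + (t:ℂ) * (3 * Complex.I * Asum F G v k + 2 * Complex.I * Bsum F G v k) := rfl

lemma mem_mQ {A B C D E : Finset ℤ} {k : ℤ} {p : ℤ × ℤ × ℤ × ℤ × ℤ} :
    p ∈ mixedQuintuples A B C D E k ↔
      p.1 ∈ A ∧ p.2.1 ∈ B ∧ p.2.2.1 ∈ C ∧ p.2.2.2.1 ∈ D ∧ p.2.2.2.2 ∈ E ∧
        p.1 - p.2.1 + p.2.2.1 - p.2.2.2.1 + p.2.2.2.2 = k := by
  simp [mixedQuintuples, Finset.mem_filter, Finset.mem_product, and_assoc]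

/-- Reindexing identity for the `3i` correction term. -/
lemma sumA (F G : Finset ℤ) (v : ℤ → ℂ) :
    ∑ k ∈ F, (starRingEnd ℂ) (v k) * Asum F G v k
      = ∑ m ∈ G, truncRHS F v m * (starRingEnd ℂ) (Qsum F v m) := by
  have lhs : ∑ k ∈ F, (starRingEnd ℂ) (v k) * Asum F G v k
      = ∑ k ∈ F, ∑ p ∈ mixedQuintuples G F F F F k,
          (starRingEnd ℂ) (v k) * (truncRHS F v p.1 * (starRingEnd ℂ) (v p.2.1) * v p.2.2.1
            * (starRingEnd ℂ) (v p.2.2.2.1) * v p.2.2.2.2) := by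
    simp [Asum, Finset.mul_sum]
  have rhs : ∑ m ∈ G, truncRHS F v m * (starRingEnd ℂ) (Qsum F v m)
      = ∑ m ∈ G, ∑ p ∈ mixedQuintuples F F F F F m,
          truncRHS F v m * ((starRingEnd ℂ) (v p.1) * v p.2.1 * (starRingEnd ℂ) (v p.2.2.1)
            * v p.2.2.2.1 * (starRingEnd ℂ) (v p.2.2.2.2)) := by
    simp [Qsum, map_sum, map_mul, Finset.mul_sum, Complex.conj_conj, mul_assoc]
  rw [lhs, rhs, Finset.sum_sigma', Finset.sum_sigma']
  refine Finset.sum_nbij'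
    (fun q => ⟨q.snd.1, (q.snd.2.1, q.snd.2.2.1, q.snd.2.2.2.1, q.snd.2.2.2.2, q.fst)⟩)
    (fun q => ⟨q.snd.2.2.2.2, (q.fst, q.snd.1, q.snd.2.1, q.snd.2.2.1, q.snd.2.2.2.1)⟩)
    ?_ ?_ ?_ ?_ ?_
  · rintro ⟨k, k1, k2, k3, k4, k5⟩ hq
    simp only [Finset.mem_sigma, mem_mQ] at hq ⊢
    obtain ⟨h0, h1, h2, h3, h4, h5, hc⟩ := hq
    exact ⟨h1, h2, h3, h4, h5, h0, by omega⟩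
  · rintro ⟨m, p1, p2, p3, p4, p5⟩ hq
    simp only [Finset.mem_sigma, mem_mQ] at hq ⊢
    obtain ⟨h0, h1, h2, h3, h4, h5, hc⟩ := hq
    exact ⟨h5, h0, h1, h2, h3, h4, by omega⟩
  · rintro ⟨k, k1, k2, k3, k4, k5⟩ _; rfl
  · rintro ⟨m, p1, p2, p3, p4, p5⟩ _; rfl
  · rintro ⟨k, k1, k2, k3, k4, k5⟩ _; ring

/-- Reindexing identity for the `2i` correction term. -/
lemma sumB (F G : Finset ℤ) (v : ℤ → ℂ) :
    ∑ k ∈ F, (starRingEnd ℂ) (v k) * Bsum F G v k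
      = ∑ m ∈ G, (starRingEnd ℂ) (truncRHS F v m) * Qsum F v m := by
  have lhs : ∑ k ∈ F, (starRingEnd ℂ) (v k) * Bsum F G v k
      = ∑ k ∈ F, ∑ p ∈ mixedQuintuples F G F F F k,
          (starRingEnd ℂ) (v k) * (v p.1 * (starRingEnd ℂ) (truncRHS F v p.2.1) * v p.2.2.1
            * (starRingEnd ℂ) (v p.2.2.2.1) * v p.2.2.2.2) := by
    simp [Bsum, Finset.mul_sum]
  have rhs : ∑ m ∈ G, (starRingEnd ℂ) (truncRHS F v m) * Qsum F v m
      = ∑ m ∈ G, ∑ p ∈ mixedQuintuples F F F F F m,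
          (starRingEnd ℂ) (truncRHS F v m) * (v p.1 * (starRingEnd ℂ) (v p.2.1) * v p.2.2.1
            * (starRingEnd ℂ) (v p.2.2.2.1) * v p.2.2.2.2) := by
    simp [Qsum, Finset.mul_sum, mul_assoc]
  rw [lhs, rhs, Finset.sum_sigma', Finset.sum_sigma']
  refine Finset.sum_nbij'
    (fun q => ⟨q.snd.2.1, (q.snd.1, q.snd.2.2.2.1, q.snd.2.2.1, q.fst, q.snd.2.2.2.2)⟩)
    (fun q => ⟨q.snd.2.2.2.1, (q.snd.1, q.fst, q.snd.2.2.1, q.snd.2.1, q.snd.2.2.2.2)⟩)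
    ?_ ?_ ?_ ?_ ?_
  · rintro ⟨k, k1, k2, k3, k4, k5⟩ hq
    simp only [Finset.mem_sigma, mem_mQ] at hq ⊢
    obtain ⟨h0, h1, h2, h3, h4, h5, hc⟩ := hq
    exact ⟨h2, h1, h4, h3, h0, h5, by omega⟩
  · rintro ⟨m, p1, p2, p3, p4, p5⟩ hq
    simp only [Finset.mem_sigma, mem_mQ] at hq ⊢
    obtain ⟨h0, h1, h2, h3, h4, h5, hc⟩ := hq
    exact ⟨h4, h1, h0, h3, h2, h5, by omega⟩
  · rintro ⟨k, k1, k2, k3, k4, k5⟩ _; rfl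
  · rintro ⟨m, p1, p2, p3, p4, p5⟩ _; rfl
  · rintro ⟨k, k1, k2, k3, k4, k5⟩ _; ring

/-- Conjugation symmetry of the resolved quintic sum. -/
lemma sumC (F : Finset ℤ) (v : ℤ → ℂ) :
    ∑ k ∈ F, v k * (starRingEnd ℂ) (Qsum F v k)
      = ∑ k ∈ F, (starRingEnd ℂ) (v k) * Qsum F v k := by
  have lhs : ∑ k ∈ F, v k * (starRingEnd ℂ) (Qsum F v k)
      = ∑ k ∈ F, ∑ p ∈ mixedQuintuples F F F F F k,
          v k * ((starRingEnd ℂ) (v p.1) * v p.2.1 * (starRingEnd ℂ) (v p.2.2.1)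
            * v p.2.2.2.1 * (starRingEnd ℂ) (v p.2.2.2.2)) := by
    simp [Qsum, map_sum, map_mul, Finset.mul_sum, Complex.conj_conj, mul_assoc]
  have rhs : ∑ k ∈ F, (starRingEnd ℂ) (v k) * Qsum F v k
      = ∑ k ∈ F, ∑ p ∈ mixedQuintuples F F F F F k,
          (starRingEnd ℂ) (v k) * (v p.1 * (starRingEnd ℂ) (v p.2.1) * v p.2.2.1
            * (starRingEnd ℂ) (v p.2.2.2.1) * v p.2.2.2.2) := by
    simp [Qsum, Finset.mul_sum, mul_assoc]
  rw [lhs, rhs, Finset.sum_sigma', Finset.sum_sigma']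
  refine Finset.sum_nbij'
    (fun q => ⟨q.snd.2.2.2.2, (q.snd.2.1, q.snd.1, q.snd.2.2.2.1, q.snd.2.2.1, q.fst)⟩)
    (fun q => ⟨q.snd.2.2.2.2, (q.snd.2.1, q.snd.1, q.snd.2.2.2.1, q.snd.2.2.1, q.fst)⟩)
    ?_ ?_ ?_ ?_ ?_
  · rintro ⟨k, k1, k2, k3, k4, k5⟩ hq
    simp only [Finset.mem_sigma, mem_mQ] at hq ⊢
    obtain ⟨h0, h1, h2, h3, h4, h5, hc⟩ := hq
    exact ⟨h5, h2, h1, h4, h3, h0, by omega⟩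
  · rintro ⟨k, k1, k2, k3, k4, k5⟩ hq
    simp only [Finset.mem_sigma, mem_mQ] at hq ⊢
    obtain ⟨h0, h1, h2, h3, h4, h5, hc⟩ := hq
    exact ⟨h5, h2, h1, h4, h3, h0, by omega⟩
  · rintro ⟨k, k1, k2, k3, k4, k5⟩ _; rfl
  · rintro ⟨k, k1, k2, k3, k4, k5⟩ _; rfl
  · rintro ⟨k, k1, k2, k3, k4, k5⟩ _; ring

/-- The key algebraic identity behind the mass-dissipation law. -/
lemma key_identity (F G : Finset ℤ) (hdisj : Disjoint F G) (v : ℤ → ℂ) (t : ℝ) :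
    ∑ k ∈ F, ((starRingEnd ℂ) (v k) * tModelRHS F G v t k
        + v k * (starRingEnd ℂ) (tModelRHS F G v t k))
      = ((-2 * t * ∑ k ∈ G, ‖truncRHS F v k‖ ^ 2 : ℝ) : ℂ) := by
  have hnotF : ∀ m ∈ G, m ∉ F := fun m hm => (Finset.disjoint_right.mp hdisj) hm
  have hR : ∀ m ∈ G, truncRHS F v m = Complex.I * Qsum F v m := by
    intro m hm
    rw [truncRHS_eq, if_neg (hnotF m hm), zero_add]
  have expand : ∀ k ∈ F,
      (starRingEnd ℂ) (v k) * tModelRHS F G v t k + v k * (starRingEnd ℂ) (tModelRHS F G v t k)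
      = ((starRingEnd ℂ) (v k) * (-Complex.I * (k:ℂ)^2 * v k)
          + v k * (starRingEnd ℂ) (-Complex.I * (k:ℂ)^2 * v k))
        + ((starRingEnd ℂ) (v k) * (Complex.I * Qsum F v k)
            + v k * (starRingEnd ℂ) (Complex.I * Qsum F v k))
        + (t:ℂ) * (3 * Complex.I * ((starRingEnd ℂ) (v k) * Asum F G v k)
            + 2 * Complex.I * ((starRingEnd ℂ) (v k) * Bsum F G v k)
            - 3 * Complex.I * (v k * (starRingEnd ℂ) (Asum F G v k))
            - 2 * Complex.I * (v k * (starRingEnd ℂ) (Bsum F G v k))) := by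
    intro k _
    rw [tModelRHS_eq]
    simp only [map_add, map_mul, map_neg, map_pow, map_intCast, map_ofNat,
      Complex.conj_I, Complex.conj_ofReal]
    ring
  rw [Finset.sum_congr rfl expand, Finset.sum_add_distrib, Finset.sum_add_distrib]
  have h1 : ∑ k ∈ F, ((starRingEnd ℂ) (v k) * (-Complex.I * (k:ℂ)^2 * v k)
      + v k * (starRingEnd ℂ) (-Complex.I * (k:ℂ)^2 * v k)) = 0 := by
    apply Finset.sum_eq_zero
    intro k _
    simp only [map_mul, map_neg, map_pow, map_intCast, Complex.conj_I]
    ring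
  have h2 : ∑ k ∈ F, ((starRingEnd ℂ) (v k) * (Complex.I * Qsum F v k)
      + v k * (starRingEnd ℂ) (Complex.I * Qsum F v k)) = 0 := by
    have e : ∑ k ∈ F, ((starRingEnd ℂ) (v k) * (Complex.I * Qsum F v k)
        + v k * (starRingEnd ℂ) (Complex.I * Qsum F v k))
        = Complex.I * (∑ k ∈ F, (starRingEnd ℂ) (v k) * Qsum F v k)
          - Complex.I * (∑ k ∈ F, v k * (starRingEnd ℂ) (Qsum F v k)) := by
      rw [Finset.mul_sum, Finset.mul_sum, ← Finset.sum_sub_distrib]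
      refine Finset.sum_congr rfl fun k _ => ?_
      simp only [map_mul, Complex.conj_I]
      ring
    rw [e, sumC]; ring
  have h3 := sumA F G v
  have h4 := sumB F G v
  have h3' : ∑ k ∈ F, v k * (starRingEnd ℂ) (Asum F G v k)
      = ∑ m ∈ G, (starRingEnd ℂ) (truncRHS F v m) * Qsum F v m := by
    have := congrArg (starRingEnd ℂ) h3
    simpa only [map_sum, map_mul, Complex.conj_conj] using this
  have h4' : ∑ k ∈ F, v k * (starRingEnd ℂ) (Bsum F G v k)
      = ∑ m ∈ G, truncRHS F v m * (starRingEnd ℂ) (Qsum F v m) := by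
    have := congrArg (starRingEnd ℂ) h4
    simpa only [map_sum, map_mul, Complex.conj_conj] using this
  have h5 : ∑ k ∈ F, (t:ℂ) * (3 * Complex.I * ((starRingEnd ℂ) (v k) * Asum F G v k)
      + 2 * Complex.I * ((starRingEnd ℂ) (v k) * Bsum F G v k)
      - 3 * Complex.I * (v k * (starRingEnd ℂ) (Asum F G v k))
      - 2 * Complex.I * (v k * (starRingEnd ℂ) (Bsum F G v k)))
      = (t:ℂ) * (3 * Complex.I * (∑ k ∈ F, (starRingEnd ℂ) (v k) * Asum F G v k)
          + 2 * Complex.I * (∑ k ∈ F, (starRingEnd ℂ) (v k) * Bsum F G v k)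
          - 3 * Complex.I * (∑ k ∈ F, v k * (starRingEnd ℂ) (Asum F G v k))
          - 2 * Complex.I * (∑ k ∈ F, v k * (starRingEnd ℂ) (Bsum F G v k))) := by
    rw [← Finset.mul_sum]
    congr 1
    rw [Finset.sum_sub_distrib, Finset.sum_sub_distrib, Finset.sum_add_distrib,
      ← Finset.mul_sum, ← Finset.mul_sum, ← Finset.mul_sum, ← Finset.mul_sum]
  rw [h1, h2, h5, h3, h4, h3', h4']
  have per : ∀ m ∈ G,
      truncRHS F v m * (starRingEnd ℂ) (Qsum F v m)
        - (starRingEnd ℂ) (truncRHS F v m) * Qsum F v m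
      = 2 * Complex.I * ((Complex.normSq (truncRHS F v m) : ℝ) : ℂ) := by
    intro m hm
    rw [← Complex.mul_conj (truncRHS F v m), hR m hm]
    simp only [map_mul, Complex.conj_I]
    linear_combination (2 * Complex.I * Qsum F v m * (starRingEnd ℂ) (Qsum F v m))
      * Complex.I_sq
  calc 0 + 0 + (t:ℂ) * (3 * Complex.I * (∑ m ∈ G, truncRHS F v m * (starRingEnd ℂ) (Qsum F v m))
          + 2 * Complex.I * (∑ m ∈ G, (starRingEnd ℂ) (truncRHS F v m) * Qsum F v m)
          - 3 * Complex.I * (∑ m ∈ G, (starRingEnd ℂ) (truncRHS F v m) * Qsum F v m)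
          - 2 * Complex.I * (∑ m ∈ G, truncRHS F v m * (starRingEnd ℂ) (Qsum F v m)))
      = (t:ℂ) * Complex.I * ∑ m ∈ G, (truncRHS F v m * (starRingEnd ℂ) (Qsum F v m)
          - (starRingEnd ℂ) (truncRHS F v m) * Qsum F v m) := by
        rw [Finset.sum_sub_distrib]; ring
    _ = (t:ℂ) * Complex.I
          * ∑ m ∈ G, 2 * Complex.I * ((Complex.normSq (truncRHS F v m) : ℝ) : ℂ) := by
        rw [Finset.sum_congr rfl per]
    _ = ((-2 * t * ∑ k ∈ G, ‖truncRHS F v k‖ ^ 2 : ℝ) : ℂ) := by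
        simp only [Complex.sq_norm]
        rw [← Finset.mul_sum]
        push_cast
        linear_combination
          (2 * (t:ℂ) * ∑ m ∈ G, ((Complex.normSq (truncRHS F v m) : ℝ) : ℂ)) * Complex.I_sq

/-- Derivative of the squared modulus of a complex-valued function. -/
lemma hasDerivAt_abs_sq {f : ℝ → ℂ} {d : ℂ} {t : ℝ} (hf : HasDerivAt f d t) :
    HasDerivAt (fun s => ‖f s‖ ^ 2)
      (((starRingEnd ℂ) (f t) * d + f t * (starRingEnd ℂ) d).re) t := by
  have hre : HasDerivAt (fun s => (f s).re) d.re t := by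
    exact (Complex.reCLM.hasFDerivAt.comp_hasDerivAt t hf)
  have him : HasDerivAt (fun s => (f s).im) d.im t := by
    exact (Complex.imCLM.hasFDerivAt.comp_hasDerivAt t hf)
  have h := (hre.mul hre).add (him.mul him)
  have heq : (fun s => ‖f s‖ ^ 2)
      = fun s => (f s).re * (f s).re + (f s).im * (f s).im := by
    funext s; rw [Complex.sq_norm, Complex.normSq_apply]
  rw [heq]
  refine h.congr_deriv ?_
  simp only [Complex.add_re, Complex.mul_re, Complex.conj_re, Complex.conj_im]
  ring

/-- Mass dissipation identity for the `t`-model of the Fourier-truncated 1D critical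
focusing NLS: `d M_F(t)/dt = -2t Σ_{k ∈ G} |R_k(u'(t))|²`. -/
theorem tmodel_mass_dissipation
    (F G : Finset ℤ) (hdisj : Disjoint F G) (u' : ℝ → ℤ → ℂ)
    (hode : ∀ k ∈ F, ∀ t : ℝ,
      HasDerivAt (fun s => u' s k) (tModelRHS F G (u' t) t k) t) :
    ∀ t : ℝ,
      HasDerivAt (fun s => ∑ k ∈ F, ‖u' s k‖ ^ 2)
        (-2 * t * ∑ k ∈ G, ‖truncRHS F (u' t) k‖ ^ 2) t := by
  intro t
  have h : HasDerivAt (fun s => ∑ k ∈ F, ‖u' s k‖ ^ 2)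
      (∑ k ∈ F, ((starRingEnd ℂ) (u' t k) * tModelRHS F G (u' t) t k
        + u' t k * (starRingEnd ℂ) (tModelRHS F G (u' t) t k)).re) t :=
    HasDerivAt.fun_sum (fun k hk => hasDerivAt_abs_sq (hode k hk t))
  have e : ∑ k ∈ F, ((starRingEnd ℂ) (u' t k) * tModelRHS F G (u' t) t k
      + u' t k * (starRingEnd ℂ) (tModelRHS F G (u' t) t k)).re
      = -2 * t * ∑ k ∈ G, ‖truncRHS F (u' t) k‖ ^ 2 := by
    rw [← Complex.re_sum, key_identity F G hdisj (u' t) t, Complex.ofReal_re]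
  rw [e] at h
  exact h
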